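/- Fix a sampling design p on subsets of {1,…,N} with inclusion probabilities π_i > 0 and suppose r_i > 0 for all i. Set D_π = Σ_{i=1}^N r_i²(1−π_i)/π_i. The following are equivalent: (i) there exists an unbiased estimator δ with sup_{y∈Θ} R(δ,p;y) = D_π; (ii) the midpoint-differenced Horvitz–Thompson estimator T̂ satisfies sup_{y∈Θ} R(T̂,p;y) = D_π; (iii) Δ_{ij} = π_{ij} − π_i π_j = 0 for every pair i ≠ j. -/

import Mathlib

open Finset

noncomputable def EE {N : ℕ} (σ : Fin N → Bool) (i : Fin N) : ℝ := if σ i then 1 else -1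

lemma EE_sq {N : ℕ} (σ : Fin N → Bool) (i : Fin N) : EE σ i * EE σ i = 1 := by
  unfold EE; by_cases h : σ i <;> simp [h]

lemma EE_update_self {N : ℕ} (σ : Fin N → Bool) (t : Fin N) :
    EE (Function.update σ t (!σ t)) t = - EE σ t := by
  unfold EE; by_cases h : σ t <;> simp [h]

lemma EE_update_ne {N : ℕ} (σ : Fin N → Bool) (t i : Fin N) (b : Bool) (h : i ≠ t) :
    EE (Function.update σ t b) i = EE σ i := by
  unfold EE; rw [Function.update_of_ne h]

lemma flip_sum {N : ℕ} (t : Fin N) (f : (Fin N → Bool) → ℝ)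
    (hf : ∀ σ, f (Function.update σ t (!σ t)) = -f σ) :
    ∑ σ : Fin N → Bool, f σ = 0 := by
  refine Finset.sum_ninvolution (fun σ => Function.update σ t (!σ t)) ?_ ?_ ?_ ?_
  · intro σ; rw [hf]; ring
  · intro σ h hc
    have : Function.update σ t (!σ t) t = σ t := by
      conv_lhs => rw [show Function.update σ t (!σ t) = σ from hc]
    simp [Function.update_self] at this
  · intro σ; exact Finset.mem_univ _
  · intro σ
    funext x
    by_cases hx : x = t
    · subst hx; simp [Function.update_self]
    · simp [Function.update_of_ne hx]

lemma card_corners (N : ℕ) : (Finset.univ : Finset (Fin N → Bool)).card = 2 ^ N := by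
  simp [Fintype.card_fun]

lemma sum_EE_mul {N : ℕ} (i j : Fin N) :
    ∑ σ : Fin N → Bool, EE σ i * EE σ j = if i = j then (2 : ℝ) ^ N else 0 := by
  by_cases h : i = j
  · subst h
    simp only [EE_sq, if_pos rfl]
    rw [Finset.sum_const, card_corners]
    simp
  · rw [if_neg h]
    apply flip_sum i
    intro σ
    rw [EE_update_self, EE_update_ne _ _ _ _ (Ne.symm h)]
    ring




lemma risk_quadform {N : ℕ}
    (p : Finset (Fin N) → ℝ)
    (hp1 : ∑ s : Finset (Fin N), p s = 1)
    (π : Fin N → ℝ)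
    (hπ : ∀ i, π i = ∑ s : Finset (Fin N), if i ∈ s then p s else 0)
    (hπpos : ∀ i, 0 < π i)
    (πij : Fin N → Fin N → ℝ)
    (hπij : ∀ i j, πij i j = ∑ s : Finset (Fin N), if i ∈ s ∧ j ∈ s then p s else 0)
    (z : Fin N → ℝ) :
    ∑ s : Finset (Fin N), p s * ((∑ i ∈ s, z i / π i) - ∑ i, z i) ^ 2
      = ∑ i, ∑ j, (if i = j then z i ^ 2 * ((1 - π i) / π i)
          else z i * z j * ((πij i j - π i * π j) / (π i * π j))) := by
  classical
  set c : Fin N → Finset (Fin N) → ℝ :=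
    fun i s => (if i ∈ s then 1 / π i else 0) - 1 with hc
  have hbr : ∀ s : Finset (Fin N),
      (∑ i ∈ s, z i / π i) - ∑ i, z i = ∑ i, z i * c i s := by
    intro s
    have h1 : (∑ i ∈ s, z i / π i) = ∑ i : Fin N, if i ∈ s then z i / π i else 0 := by
      rw [Finset.sum_ite_mem, Finset.univ_inter]
    rw [h1, ← Finset.sum_sub_distrib]
    apply Finset.sum_congr rfl
    intro i _
    by_cases h : i ∈ s <;> simp [hc, h] <;> ring
  have key : ∀ i j : Fin N,
      ∑ s : Finset (Fin N), p s * (c i s * c j s) = πij i j / (π i * π j) - 1 := by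
    intro i j
    have expand : ∀ s : Finset (Fin N), p s * (c i s * c j s)
        = ((if i ∈ s ∧ j ∈ s then p s else 0) * (1 / (π i * π j))
          - (if i ∈ s then p s else 0) * (1 / π i))
          - (if j ∈ s then p s else 0) * (1 / π j) + p s := by
      intro s
      by_cases hi : i ∈ s <;> by_cases hj : j ∈ s <;>
        simp [hc, hi, hj] <;> field_simp <;> ring
    rw [Finset.sum_congr rfl (fun s _ => expand s)]
    rw [Finset.sum_add_distrib, Finset.sum_sub_distrib, Finset.sum_sub_distrib,
      ← Finset.sum_mul, ← Finset.sum_mul, ← Finset.sum_mul, ← hπij, ← hπ, ← hπ, hp1]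
    have : π i * (1 / π i) = 1 := by
      rw [mul_one_div, div_self (hπpos i).ne']
    have hj : π j * (1 / π j) = 1 := by
      rw [mul_one_div, div_self (hπpos j).ne']
    rw [this, hj]
    ring
  calc ∑ s : Finset (Fin N), p s * ((∑ i ∈ s, z i / π i) - ∑ i, z i) ^ 2
      = ∑ s : Finset (Fin N), ∑ i, ∑ j, z i * z j * (p s * (c i s * c j s)) := by
        apply Finset.sum_congr rfl; intro s _
        rw [hbr s, sq, Finset.sum_mul_sum, Finset.mul_sum]
        apply Finset.sum_congr rfl; intro i _
        rw [Finset.mul_sum]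
        apply Finset.sum_congr rfl; intro j _
        ring
    _ = ∑ i, ∑ j, z i * z j * (∑ s : Finset (Fin N), p s * (c i s * c j s)) := by
        rw [Finset.sum_comm]
        apply Finset.sum_congr rfl; intro i _
        rw [Finset.sum_comm]
        apply Finset.sum_congr rfl; intro j _
        rw [Finset.mul_sum]
    _ = _ := by
        apply Finset.sum_congr rfl; intro i _
        apply Finset.sum_congr rfl; intro j _
        rw [key i j]
        by_cases h : i = j
        · subst h
          rw [if_pos rfl]
          have hii : πij i i = π i := by
            rw [hπij, hπ]
            exact Finset.sum_congr rfl (fun s _ => by by_cases hs : i ∈ s <;> simp [hs])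
          have hi := (hπpos i).ne'
          rw [hii, div_mul_cancel_left₀ hi, sub_div, div_self hi, one_div, sq]
        · rw [if_neg h]
          have hi := (hπpos i).ne'
          have hj := (hπpos j).ne'
          field_simp

lemma flip_prod {N : ℕ} (t : Fin N) (c : (Fin N → Bool) → ℝ)
    (hc : ∀ σ b, c (Function.update σ t b) = c σ) :
    ∑ σ : Fin N → Bool, c σ * EE σ t = 0 :=
  flip_sum t _ (fun σ => by rw [hc, EE_update_self]; ring)

lemma sum_EE4 {N : ℕ} {i j k l : Fin N} (hij : i ≠ j) (hkl : k ≠ l) :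
    ∑ σ : Fin N → Bool, EE σ i * EE σ j * (EE σ k * EE σ l)
      = if (k = i ∧ l = j) ∨ (k = j ∧ l = i) then (2 : ℝ) ^ N else 0 := by
  by_cases hki : k = i
  · subst hki
    by_cases hlj : l = j
    · subst hlj
      rw [if_pos (Or.inl ⟨rfl, rfl⟩)]
      have h : ∀ σ : Fin N → Bool, EE σ k * EE σ l * (EE σ k * EE σ l) = 1 := by
        intro σ
        have h1 := EE_sq σ k
        have h2 := EE_sq σ l
        nlinarith [h1, h2]
      rw [Finset.sum_congr rfl (fun σ _ => h σ), Finset.sum_const, card_corners]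
      simp
    · rw [if_neg (by rintro (⟨-, h⟩ | ⟨h, -⟩); exact hlj h; exact hij h)]
      have h : ∀ σ : Fin N → Bool, EE σ k * EE σ j * (EE σ k * EE σ l)
          = (EE σ k * EE σ j * EE σ k) * EE σ l := fun σ => by ring
      rw [Finset.sum_congr rfl (fun σ _ => h σ)]
      refine flip_prod l _ (fun σ bb => by
        rw [EE_update_ne _ _ _ _ hkl, EE_update_ne _ _ _ _ (fun h => hlj h.symm)])
  · by_cases hkj : k = j
    · subst hkj
      by_cases hli : l = i
      · subst hli
        rw [if_pos (Or.inr ⟨rfl, rfl⟩)]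
        have h : ∀ σ : Fin N → Bool, EE σ l * EE σ k * (EE σ k * EE σ l) = 1 := by
          intro σ
          have h1 := EE_sq σ k
          have h2 := EE_sq σ l
          nlinarith [h1, h2]
        rw [Finset.sum_congr rfl (fun σ _ => h σ), Finset.sum_const, card_corners]
        simp
      · rw [if_neg (by rintro (⟨h, -⟩ | ⟨-, h⟩); exact hki h; exact hli h)]
        have h : ∀ σ : Fin N → Bool, EE σ i * EE σ k * (EE σ k * EE σ l)
            = (EE σ i * EE σ k * EE σ k) * EE σ l := fun σ => by ring
        rw [Finset.sum_congr rfl (fun σ _ => h σ)]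
        refine flip_prod l _ (fun σ bb => by
          rw [EE_update_ne _ _ _ _ (fun h => hli h.symm), EE_update_ne _ _ _ _ hkl])
    · rw [if_neg (by rintro (⟨h, -⟩ | ⟨h, -⟩); exact hki h; exact hkj h)]
      have h : ∀ σ : Fin N → Bool, EE σ i * EE σ j * (EE σ k * EE σ l)
          = (EE σ i * EE σ j * EE σ l) * EE σ k := fun σ => by ring
      rw [Finset.sum_congr rfl (fun σ _ => h σ)]
      refine flip_prod k _ (fun σ bb => by
        rw [EE_update_ne _ _ _ _ (fun h => hki h.symm), EE_update_ne _ _ _ _ (fun h => hkj h.symm),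
          EE_update_ne _ _ _ _ (Ne.symm hkl)])

lemma swap_design_sum {N : ℕ} (p : Finset (Fin N) → ℝ) (w : Fin N → ℝ) :
    ∑ s : Finset (Fin N), p s * ∑ k ∈ s, w k
      = ∑ k, w k * (∑ s : Finset (Fin N), if k ∈ s then p s else 0) := by
  classical
  have h1 : ∀ s : Finset (Fin N), p s * ∑ k ∈ s, w k
      = ∑ k : Fin N, (if k ∈ s then p s else 0) * w k := by
    intro s
    rw [Finset.mul_sum]
    rw [show (∑ k ∈ s, p s * w k) = ∑ k : Fin N, if k ∈ s then p s * w k else 0 by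
      rw [Finset.sum_ite_mem, Finset.univ_inter]]
    exact Finset.sum_congr rfl (fun k _ => by by_cases h : k ∈ s <;> simp [h])
  rw [Finset.sum_congr rfl (fun s _ => h1 s), Finset.sum_comm]
  exact Finset.sum_congr rfl (fun k _ => by rw [← Finset.sum_mul, mul_comm])


lemma one_to_three
    (N : ℕ) (a b : Fin N → ℝ) (hab : ∀ i, a i ≤ b i)
    (m r : Fin N → ℝ)
    (hm : ∀ i, m i = (a i + b i) / 2)
    (hr : ∀ i, r i = (b i - a i) / 2) (hrpos : ∀ i, 0 < r i)
    (p : Finset (Fin N) → ℝ) (hp0 : ∀ s, 0 ≤ p s)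
    (hp1 : ∑ s : Finset (Fin N), p s = 1)
    (π : Fin N → ℝ)
    (hπ : ∀ i, π i = ∑ s : Finset (Fin N), if i ∈ s then p s else 0)
    (hπpos : ∀ i, 0 < π i)
    (πij : Fin N → Fin N → ℝ)
    (hπij : ∀ i j, πij i j = ∑ s : Finset (Fin N), if i ∈ s ∧ j ∈ s then p s else 0)
    (Dπ : ℝ) (hDπ : Dπ = ∑ i, r i ^ 2 * ((1 - π i) / π i))
    (δ : Finset (Fin N) → (Fin N → ℝ) → ℝ)
    (hloc : ∀ s (y y' : Fin N → ℝ), (∀ i ∈ s, y i = y' i) → δ s y = δ s y')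
    (hunb : ∀ y : Fin N → ℝ, (∀ i, y i ∈ Set.Icc (a i) (b i)) →
      ∑ s : Finset (Fin N), p s * δ s y = ∑ i, y i)
    (hlub : IsLUB ((fun y : Fin N → ℝ =>
        ∑ s : Finset (Fin N), p s * (δ s y - ∑ i, y i) ^ 2) ''
      {y : Fin N → ℝ | ∀ i, y i ∈ Set.Icc (a i) (b i)}) Dπ) :
    ∀ i j, i ≠ j → πij i j - π i * π j = 0 := by
  classical
  have hπne : ∀ k, π k ≠ 0 := fun k => (hπpos k).ne'
  obtain ⟨yc, hyc_def⟩ : ∃ f : (Fin N → Bool) → (Fin N → ℝ),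
      f = fun σ k => m k + EE σ k * r k := ⟨_, rfl⟩
  obtain ⟨cst, hcst_def⟩ : ∃ f : Fin N → ℝ,
      f = fun k => r k * ((1 - π k) / π k) := ⟨_, rfl⟩
  obtain ⟨gg, hgg_def⟩ : ∃ f : Finset (Fin N) → (Fin N → Bool) → ℝ,
      f = fun s σ => δ s (yc σ) - (∑ k, m k) - ∑ k ∈ s, EE σ k * r k := ⟨_, rfl⟩
  obtain ⟨uu, huu_def⟩ : ∃ f : Finset (Fin N) → (Fin N → Bool) → ℝ,
      f = fun s σ => gg s σ - ∑ k ∈ s, cst k * EE σ k := ⟨_, rfl⟩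
  obtain ⟨dd, hdd_def⟩ : ∃ f : Finset (Fin N) → Fin N → ℝ,
      f = fun s k => if k ∈ s then cst k else -(r k) := ⟨_, rfl⟩
  obtain ⟨A, hA_def⟩ : ∃ f : Finset (Fin N) → Fin N → ℝ,
      f = fun s k => ∑ σ : Fin N → Bool, gg s σ * EE σ k := ⟨_, rfl⟩
  have hycΘ : ∀ σ, (∀ k, yc σ k ∈ Set.Icc (a k) (b k)) := by
    intro σ k
    have hmr : m k - r k = a k := by rw [hm, hr]; ring
    have hpr : m k + r k = b k := by rw [hm, hr]; ring
    have hrp := hrpos k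
    simp only [hyc_def, EE]
    by_cases h : σ k
    · rw [if_pos h]
      exact ⟨by linarith, by linarith⟩
    · rw [if_neg h]
      exact ⟨by linarith, by linarith⟩
  have hyc_sum : ∀ σ, (∑ k, yc σ k) = (∑ k, m k) + ∑ k, EE σ k * r k := by
    intro σ
    simp only [hyc_def]
    rw [Finset.sum_add_distrib]
  have hcstπ : ∀ k, cst k * π k = r k * (1 - π k) := by
    intro k
    simp only [hcst_def]
    rw [mul_assoc, div_mul_cancel₀ _ (hπne k)]
  have hub : ∀ σ : Fin N → Bool,
      ∑ s : Finset (Fin N), p s * (δ s (yc σ) - (∑ k, yc σ k)) ^ 2 ≤ Dπ :=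
    fun σ => hlub.1 ⟨yc σ, hycΘ σ, rfl⟩
  have hgg_loc : ∀ s (σ : Fin N → Bool) (t : Fin N), t ∉ s → ∀ bb : Bool,
      gg s (Function.update σ t bb) = gg s σ := by
    intro s σ t ht bb
    have h1 : δ s (yc (Function.update σ t bb)) = δ s (yc σ) := by
      apply hloc
      intro k hk
      simp only [hyc_def]
      rw [EE_update_ne _ _ _ _ (fun h => ht (by rw [← h]; exact hk))]
    have h2 : ∑ k ∈ s, EE (Function.update σ t bb) k * r k = ∑ k ∈ s, EE σ k * r k :=
      Finset.sum_congr rfl (fun k hk => by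
        rw [EE_update_ne _ _ _ _ (fun h => ht (by rw [← h]; exact hk))])
    simp only [hgg_def, h1, h2]
  have hA0 : ∀ s (k : Fin N), k ∉ s → A s k = 0 := by
    intro s k hk
    simp only [hA_def]
    exact flip_sum k _ (fun σ => by rw [hgg_loc s σ k hk, EE_update_self]; ring)
  have hunb' : ∀ σ : Fin N → Bool,
      ∑ s : Finset (Fin N), p s * gg s σ = ∑ k, EE σ k * r k * (1 - π k) := by
    intro σ
    have h0 := hunb (yc σ) (hycΘ σ)
    calc ∑ s : Finset (Fin N), p s * gg s σ
        = ∑ s : Finset (Fin N),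
            (p s * δ s (yc σ) - p s * (∑ k, m k) - p s * ∑ k ∈ s, EE σ k * r k) :=
          Finset.sum_congr rfl (fun s _ => by simp only [hgg_def]; ring)
      _ = (∑ s : Finset (Fin N), p s * δ s (yc σ))
            - (∑ s : Finset (Fin N), p s) * (∑ k, m k)
            - ∑ s : Finset (Fin N), p s * ∑ k ∈ s, EE σ k * r k := by
          rw [Finset.sum_sub_distrib, Finset.sum_sub_distrib, Finset.sum_mul]
      _ = (∑ k, yc σ k) - (∑ k, m k) - ∑ k, (EE σ k * r k) * π k := by
          rw [h0, hp1, one_mul, swap_design_sum p (fun k => EE σ k * r k)]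
          congr 1
          exact Finset.sum_congr rfl (fun k _ => by rw [← hπ k])
      _ = ∑ k, EE σ k * r k * (1 - π k) := by
          rw [hyc_sum σ,
            show (∑ k, EE σ k * r k * (1 - π k))
              = (∑ k, EE σ k * r k) - ∑ k, EE σ k * r k * π k from by

              rw [← Finset.sum_sub_distrib]
              exact Finset.sum_congr rfl (fun k _ => by ring)]
          rw [show (∑ k, EE σ k * r k * π k) = ∑ k, (EE σ k * r k) * π k from rfl]
          ring
  have hAsum : ∀ k, ∑ s : Finset (Fin N), p s * A s k = 2 ^ N * (r k * (1 - π k)) := by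
    intro k
    calc ∑ s : Finset (Fin N), p s * A s k
        = ∑ s : Finset (Fin N), ∑ σ : Fin N → Bool, p s * gg s σ * EE σ k := by
          refine Finset.sum_congr rfl (fun s _ => ?_)
          simp only [hA_def]
          rw [Finset.mul_sum]
          exact Finset.sum_congr rfl (fun σ _ => by ring)
      _ = ∑ σ : Fin N → Bool, ∑ s : Finset (Fin N), p s * gg s σ * EE σ k := Finset.sum_comm
      _ = ∑ σ : Fin N → Bool, (∑ l, EE σ l * r l * (1 - π l)) * EE σ k := by
          refine Finset.sum_congr rfl (fun σ _ => ?_)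
          rw [← Finset.sum_mul, hunb' σ]
      _ = ∑ σ : Fin N → Bool, ∑ l, (r l * (1 - π l)) * (EE σ l * EE σ k) := by
          refine Finset.sum_congr rfl (fun σ _ => ?_)
          rw [Finset.sum_mul]
          exact Finset.sum_congr rfl (fun l _ => by ring)
      _ = ∑ l, ∑ σ : Fin N → Bool, (r l * (1 - π l)) * (EE σ l * EE σ k) := Finset.sum_comm
      _ = ∑ l, (r l * (1 - π l)) * (if l = k then (2:ℝ) ^ N else 0) := by
          refine Finset.sum_congr rfl (fun l _ => ?_)
          rw [← Finset.mul_sum, sum_EE_mul]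
      _ = ∑ l, (if l = k then (r l * (1 - π l)) * (2:ℝ) ^ N else 0) :=
          Finset.sum_congr rfl (fun l _ => by rw [mul_ite, mul_zero])
      _ = (r k * (1 - π k)) * 2 ^ N := by
          rw [Finset.sum_ite_eq' Finset.univ k (fun l => (r l * (1 - π l)) * (2:ℝ) ^ N)]
          simp
      _ = 2 ^ N * (r k * (1 - π k)) := by ring
  have hUE : ∀ s (k : Fin N), ∑ σ : Fin N → Bool, uu s σ * EE σ k
      = A s k - (if k ∈ s then 2 ^ N * cst k else 0) := by
    intro s k
    calc ∑ σ : Fin N → Bool, uu s σ * EE σ k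
        = ∑ σ : Fin N → Bool, (gg s σ * EE σ k - ∑ l ∈ s, cst l * (EE σ l * EE σ k)) := by
          refine Finset.sum_congr rfl (fun σ _ => ?_)
          simp only [huu_def]
          rw [sub_mul, Finset.sum_mul]
          congr 1
          exact Finset.sum_congr rfl (fun l _ => by ring)
      _ = A s k - ∑ σ : Fin N → Bool, ∑ l ∈ s, cst l * (EE σ l * EE σ k) := by
          rw [Finset.sum_sub_distrib]
          simp only [hA_def]
      _ = A s k - ∑ l ∈ s, cst l * ∑ σ : Fin N → Bool, EE σ l * EE σ k := by
          congr 1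
          rw [Finset.sum_comm]
          exact Finset.sum_congr rfl (fun l _ => by rw [Finset.mul_sum])
      _ = A s k - (if k ∈ s then 2 ^ N * cst k else 0) := by
          congr 1
          calc ∑ l ∈ s, cst l * ∑ σ : Fin N → Bool, EE σ l * EE σ k
              = ∑ l ∈ s, (if l = k then cst l * (2:ℝ) ^ N else 0) :=
                Finset.sum_congr rfl (fun l _ => by rw [sum_EE_mul, mul_ite, mul_zero])
            _ = if k ∈ s then cst k * (2:ℝ) ^ N else 0 := Finset.sum_ite_eq' s k _
            _ = if k ∈ s then 2 ^ N * cst k else 0 := by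
                by_cases h : k ∈ s <;> simp [h, mul_comm]
  have hd : ∀ s (σ : Fin N → Bool), ∑ k, dd s k * EE σ k
      = (∑ k ∈ s, (cst k * EE σ k + EE σ k * r k)) - ∑ k, EE σ k * r k := by
    intro s σ
    calc ∑ k, dd s k * EE σ k
        = ∑ k, ((if k ∈ s then cst k * EE σ k + EE σ k * r k else 0) - EE σ k * r k) := by
          refine Finset.sum_congr rfl (fun k _ => ?_)
          by_cases h : k ∈ s
          · simp only [hdd_def]
            rw [if_pos h, if_pos h]
            ring
          · simp only [hdd_def]
            rw [if_neg h, if_neg h]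
            ring
      _ = (∑ k, if k ∈ s then cst k * EE σ k + EE σ k * r k else 0) - ∑ k, EE σ k * r k :=
          Finset.sum_sub_distrib _ _
      _ = (∑ k ∈ s, (cst k * EE σ k + EE σ k * r k)) - ∑ k, EE σ k * r k := by
          rw [Finset.sum_ite_mem, Finset.univ_inter]
  have hvu : ∀ s (σ : Fin N → Bool),
      δ s (yc σ) - (∑ k, yc σ k) = uu s σ + ∑ k, dd s k * EE σ k := by
    intro s σ
    rw [hd s σ, hyc_sum σ]
    simp only [huu_def, hgg_def]
    rw [Finset.sum_add_distrib]
    ring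
  have hexp : ∀ s, ∑ σ : Fin N → Bool, (δ s (yc σ) - (∑ k, yc σ k)) ^ 2
      = (∑ σ : Fin N → Bool, uu s σ ^ 2)
        + 2 * (∑ k, dd s k * (∑ σ : Fin N → Bool, uu s σ * EE σ k))
        + 2 ^ N * ∑ k, dd s k ^ 2 := by
    intro s
    have hmid : ∑ σ : Fin N → Bool, uu s σ * ∑ k, dd s k * EE σ k
        = ∑ k, dd s k * (∑ σ : Fin N → Bool, uu s σ * EE σ k) := by
      calc ∑ σ : Fin N → Bool, uu s σ * ∑ k, dd s k * EE σ k
          = ∑ σ : Fin N → Bool, ∑ k, dd s k * (uu s σ * EE σ k) := by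
            refine Finset.sum_congr rfl (fun σ _ => ?_)
            rw [Finset.mul_sum]
            exact Finset.sum_congr rfl (fun k _ => by ring)
        _ = ∑ k, ∑ σ : Fin N → Bool, dd s k * (uu s σ * EE σ k) := Finset.sum_comm
        _ = ∑ k, dd s k * (∑ σ : Fin N → Bool, uu s σ * EE σ k) :=
            Finset.sum_congr rfl (fun k _ => by rw [Finset.mul_sum])
    have hlast : ∑ σ : Fin N → Bool, (∑ k, dd s k * EE σ k) ^ 2 = 2 ^ N * ∑ k, dd s k ^ 2 := by
      calc ∑ σ : Fin N → Bool, (∑ k, dd s k * EE σ k) ^ 2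
          = ∑ σ : Fin N → Bool, ∑ k, ∑ l, (dd s k * dd s l) * (EE σ k * EE σ l) := by
            refine Finset.sum_congr rfl (fun σ _ => ?_)
            rw [sq, Finset.sum_mul_sum]
            exact Finset.sum_congr rfl (fun k _ =>
              Finset.sum_congr rfl (fun l _ => by ring))
        _ = ∑ k, ∑ σ : Fin N → Bool, ∑ l, (dd s k * dd s l) * (EE σ k * EE σ l) :=
            Finset.sum_comm
        _ = ∑ k, ∑ l, ∑ σ : Fin N → Bool, (dd s k * dd s l) * (EE σ k * EE σ l) :=
            Finset.sum_congr rfl (fun k _ => Finset.sum_comm)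
        _ = ∑ k, ∑ l, (dd s k * dd s l) * (if k = l then (2:ℝ) ^ N else 0) :=
            Finset.sum_congr rfl (fun k _ => Finset.sum_congr rfl (fun l _ => by
              rw [← Finset.mul_sum, sum_EE_mul]))
        _ = ∑ k, (dd s k * dd s k) * (2:ℝ) ^ N := by
            refine Finset.sum_congr rfl (fun k _ => ?_)
            calc ∑ l, (dd s k * dd s l) * (if k = l then (2:ℝ) ^ N else 0)
                = ∑ l, (if k = l then (dd s k * dd s l) * (2:ℝ) ^ N else 0) :=
                  Finset.sum_congr rfl (fun l _ => by rw [mul_ite, mul_zero])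
              _ = (dd s k * dd s k) * (2:ℝ) ^ N := by
                  rw [Finset.sum_ite_eq Finset.univ k
                    (fun l => (dd s k * dd s l) * (2:ℝ) ^ N)]
                  simp
        _ = 2 ^ N * ∑ k, dd s k ^ 2 := by
            rw [Finset.mul_sum]
            exact Finset.sum_congr rfl (fun k _ => by ring)
    calc ∑ σ : Fin N → Bool, (δ s (yc σ) - (∑ k, yc σ k)) ^ 2
        = ∑ σ : Fin N → Bool, (uu s σ ^ 2 + 2 * (uu s σ * ∑ k, dd s k * EE σ k)
            + (∑ k, dd s k * EE σ k) ^ 2) := by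
          refine Finset.sum_congr rfl (fun σ _ => ?_)
          rw [hvu s σ]
          ring
      _ = (∑ σ : Fin N → Bool, uu s σ ^ 2)
          + 2 * (∑ σ : Fin N → Bool, uu s σ * ∑ k, dd s k * EE σ k)
          + ∑ σ : Fin N → Bool, (∑ k, dd s k * EE σ k) ^ 2 := by
          rw [Finset.sum_add_distrib, Finset.sum_add_distrib, Finset.mul_sum]
      _ = _ := by rw [hmid, hlast]
  have hquad : ∑ s : Finset (Fin N), p s * ∑ k, dd s k ^ 2 = Dπ := by
    calc ∑ s : Finset (Fin N), p s * ∑ k, dd s k ^ 2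
        = ∑ s : Finset (Fin N), ∑ k,
            ((if k ∈ s then p s else 0) * (cst k ^ 2 - r k ^ 2) + p s * r k ^ 2) := by
          refine Finset.sum_congr rfl (fun s _ => ?_)
          rw [Finset.mul_sum]
          refine Finset.sum_congr rfl (fun k _ => ?_)
          by_cases h : k ∈ s
          · simp only [hdd_def]
            rw [if_pos h, if_pos h]
            ring
          · simp only [hdd_def]
            rw [if_neg h, if_neg h]
            ring
      _ = ∑ k, ∑ s : Finset (Fin N),
            ((if k ∈ s then p s else 0) * (cst k ^ 2 - r k ^ 2) + p s * r k ^ 2) :=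
          Finset.sum_comm
      _ = ∑ k, (π k * (cst k ^ 2 - r k ^ 2) + 1 * r k ^ 2) := by
          refine Finset.sum_congr rfl (fun k _ => ?_)
          rw [Finset.sum_add_distrib, ← Finset.sum_mul, ← Finset.sum_mul, ← hπ k, hp1]
      _ = ∑ k, r k ^ 2 * ((1 - π k) / π k) := by
          refine Finset.sum_congr rfl (fun k _ => ?_)
          have h := hπne k
          simp only [hcst_def]
          field_simp
          ring
      _ = Dπ := hDπ.symm
  have hcross : ∑ s : Finset (Fin N),
      p s * ∑ k, dd s k * (∑ σ : Fin N → Bool, uu s σ * EE σ k) = 0 := by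
    have hpt : ∀ s (k : Fin N), dd s k * (∑ σ : Fin N → Bool, uu s σ * EE σ k)
        = cst k * A s k - (if k ∈ s then (2:ℝ) ^ N * cst k ^ 2 else 0) := by
      intro s k
      rw [hUE s k]
      by_cases h : k ∈ s
      · simp only [hdd_def]
        rw [if_pos h, if_pos h, if_pos h]
        ring
      · simp only [hdd_def]
        rw [if_neg h, if_neg h, if_neg h, hA0 s k h]
        ring
    calc ∑ s : Finset (Fin N), p s * ∑ k, dd s k * (∑ σ : Fin N → Bool, uu s σ * EE σ k)
        = ∑ s : Finset (Fin N), ∑ k,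
            (cst k * (p s * A s k) - (if k ∈ s then p s else 0) * ((2:ℝ) ^ N * cst k ^ 2)) := by
          refine Finset.sum_congr rfl (fun s _ => ?_)
          rw [Finset.mul_sum]
          refine Finset.sum_congr rfl (fun k _ => ?_)
          rw [hpt s k]
          by_cases h : k ∈ s
          · rw [if_pos h, if_pos h]
            ring
          · rw [if_neg h, if_neg h]
            ring
      _ = ∑ k, ∑ s : Finset (Fin N),
            (cst k * (p s * A s k) - (if k ∈ s then p s else 0) * ((2:ℝ) ^ N * cst k ^ 2)) :=
          Finset.sum_comm
      _ = ∑ k, (cst k * ∑ s : Finset (Fin N), p s * A s k - π k * ((2:ℝ) ^ N * cst k ^ 2)) := by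
          refine Finset.sum_congr rfl (fun k _ => ?_)
          rw [Finset.sum_sub_distrib, ← Finset.sum_mul, ← hπ k, ← Finset.mul_sum]
      _ = ∑ k, (0:ℝ) := by
          refine Finset.sum_congr rfl (fun k _ => ?_)
          rw [hAsum k]
          have h1 : π k * ((2:ℝ) ^ N * cst k ^ 2) = (2:ℝ) ^ N * (cst k * (cst k * π k)) := by
            ring
          rw [h1, hcstπ k]
          ring
      _ = 0 := Finset.sum_const_zero
  have hWkey : (∑ σ : Fin N → Bool,
        ∑ s : Finset (Fin N), p s * (δ s (yc σ) - (∑ k, yc σ k)) ^ 2)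
      = (∑ s : Finset (Fin N), p s * ∑ σ : Fin N → Bool, uu s σ ^ 2) + 2 ^ N * Dπ := by
    calc ∑ σ : Fin N → Bool, ∑ s : Finset (Fin N), p s * (δ s (yc σ) - (∑ k, yc σ k)) ^ 2
        = ∑ s : Finset (Fin N), ∑ σ : Fin N → Bool, p s * (δ s (yc σ) - (∑ k, yc σ k)) ^ 2 :=
          Finset.sum_comm
      _ = ∑ s : Finset (Fin N), p s * ∑ σ : Fin N → Bool, (δ s (yc σ) - (∑ k, yc σ k)) ^ 2 :=
          Finset.sum_congr rfl (fun s _ => by rw [Finset.mul_sum])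
      _ = ∑ s : Finset (Fin N), (p s * (∑ σ : Fin N → Bool, uu s σ ^ 2)
            + 2 * (p s * ∑ k, dd s k * (∑ σ : Fin N → Bool, uu s σ * EE σ k))
            + 2 ^ N * (p s * ∑ k, dd s k ^ 2)) := by
          refine Finset.sum_congr rfl (fun s _ => ?_)
          rw [hexp s]
          ring
      _ = (∑ s : Finset (Fin N), p s * (∑ σ : Fin N → Bool, uu s σ ^ 2))
            + 2 * (∑ s : Finset (Fin N), p s * ∑ k, dd s k * (∑ σ : Fin N → Bool, uu s σ * EE σ k))
            + 2 ^ N * (∑ s : Finset (Fin N), p s * ∑ k, dd s k ^ 2) := by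
          rw [Finset.sum_add_distrib, Finset.sum_add_distrib, ← Finset.mul_sum, ← Finset.mul_sum]
      _ = _ := by rw [hcross, hquad]; ring
  have hWle : (∑ s : Finset (Fin N), p s * ∑ σ : Fin N → Bool, uu s σ ^ 2) ≤ 0 := by
    have h1 : (∑ σ : Fin N → Bool,
          ∑ s : Finset (Fin N), p s * (δ s (yc σ) - (∑ k, yc σ k)) ^ 2)
        ≤ ∑ _σ : Fin N → Bool, Dπ := Finset.sum_le_sum (fun σ _ => hub σ)
    rw [Finset.sum_const, card_corners, nsmul_eq_mul, hWkey] at h1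
    push_cast at h1
    linarith
  have hWge : (0:ℝ) ≤ ∑ s : Finset (Fin N), p s * ∑ σ : Fin N → Bool, uu s σ ^ 2 :=
    Finset.sum_nonneg (fun s _ => mul_nonneg (hp0 s)
      (Finset.sum_nonneg (fun σ _ => sq_nonneg _)))
  have hW0 : (∑ s : Finset (Fin N), p s * ∑ σ : Fin N → Bool, uu s σ ^ 2) = 0 :=
    le_antisymm hWle hWge
  have hu0 : ∀ s, p s ≠ 0 → ∀ σ : Fin N → Bool, uu s σ = 0 := by
    intro s hs σ
    have h1 := (Finset.sum_eq_zero_iff_of_nonneg (fun s _ => mul_nonneg (hp0 s)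
      (Finset.sum_nonneg (fun σ _ => sq_nonneg (uu s σ))))).mp hW0 s (Finset.mem_univ s)
    have h2 : ∑ σ : Fin N → Bool, uu s σ ^ 2 = 0 := by
      rcases mul_eq_zero.mp h1 with h | h
      · exact absurd h hs
      · exact h
    have h3 := (Finset.sum_eq_zero_iff_of_nonneg
      (fun σ _ => sq_nonneg (uu s σ))).mp h2 σ (Finset.mem_univ σ)
    exact pow_eq_zero_iff two_ne_zero |>.mp h3
  have hHTrisk : ∀ σ : Fin N → Bool,
      ∑ s : Finset (Fin N), p s * (δ s (yc σ) - (∑ k, yc σ k)) ^ 2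
      = ∑ s : Finset (Fin N),
          p s * ((∑ k ∈ s, (EE σ k * r k) / π k) - ∑ k, EE σ k * r k) ^ 2 := by
    intro σ
    refine Finset.sum_congr rfl (fun s _ => ?_)
    by_cases hs : p s = 0
    · rw [hs, zero_mul, zero_mul]
    · congr 1
      rw [hvu s σ, hu0 s hs σ, zero_add, hd s σ]
      have hx : ∑ k ∈ s, (cst k * EE σ k + EE σ k * r k) = ∑ k ∈ s, (EE σ k * r k) / π k := by
        refine Finset.sum_congr rfl (fun k _ => ?_)
        simp only [hcst_def]
        have h := hπne k
        field_simp
        ring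
      rw [hx]
  have hcorner : ∀ σ : Fin N → Bool,
      (∑ k, ∑ l, (if k = l then 0
        else (EE σ k * r k) * (EE σ l * r l) * ((πij k l - π k * π l) / (π k * π l)))) ≤ 0 := by
    intro σ
    have h1 := hub σ
    rw [hHTrisk σ,
      risk_quadform p hp1 π hπ hπpos πij hπij (fun k => EE σ k * r k)] at h1
    have hEEsq : ∀ k, (EE σ k * r k) ^ 2 = r k ^ 2 := by
      intro k
      rw [mul_pow, sq (EE σ k), EE_sq, one_mul]
    have hsplit : (∑ k, ∑ l, (if k = l then (EE σ k * r k) ^ 2 * ((1 - π k) / π k)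
          else (EE σ k * r k) * (EE σ l * r l) * ((πij k l - π k * π l) / (π k * π l))))
        = Dπ + ∑ k, ∑ l, (if k = l then 0
          else (EE σ k * r k) * (EE σ l * r l) * ((πij k l - π k * π l) / (π k * π l))) := by
      rw [hDπ, ← Finset.sum_add_distrib]
      refine Finset.sum_congr rfl (fun k _ => ?_)
      calc ∑ l, (if k = l then (EE σ k * r k) ^ 2 * ((1 - π k) / π k)
            else (EE σ k * r k) * (EE σ l * r l) * ((πij k l - π k * π l) / (π k * π l)))
          = ∑ l, ((if k = l then (EE σ k * r k) ^ 2 * ((1 - π k) / π k) else 0)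
              + (if k = l then 0
                else (EE σ k * r k) * (EE σ l * r l) * ((πij k l - π k * π l) / (π k * π l)))) := by
            refine Finset.sum_congr rfl (fun l _ => ?_)
            by_cases h : k = l
            · rw [if_pos h, if_pos h, if_pos h, add_zero]
            · rw [if_neg h, if_neg h, if_neg h, zero_add]
        _ = (EE σ k * r k) ^ 2 * ((1 - π k) / π k)
              + ∑ l, (if k = l then 0
                else (EE σ k * r k) * (EE σ l * r l) * ((πij k l - π k * π l) / (π k * π l))) := by
            rw [Finset.sum_add_distrib]
            congr 1
            rw [Finset.sum_ite_eq Finset.univ k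
              (fun _ => (EE σ k * r k) ^ 2 * ((1 - π k) / π k))]
            simp
        _ = r k ^ 2 * ((1 - π k) / π k)
              + ∑ l, (if k = l then 0
                else (EE σ k * r k) * (EE σ l * r l) * ((πij k l - π k * π l) / (π k * π l))) := by
            rw [hEEsq k]
    rw [hsplit] at h1
    linarith
  -- the cross form vanishes identically on corners
  have hFsum : (∑ σ : Fin N → Bool, ∑ k, ∑ l, (if k = l then 0
      else (EE σ k * r k) * (EE σ l * r l) * ((πij k l - π k * π l) / (π k * π l)))) = 0 := by
    calc ∑ σ : Fin N → Bool, ∑ k, ∑ l, (if k = l then 0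
          else (EE σ k * r k) * (EE σ l * r l) * ((πij k l - π k * π l) / (π k * π l)))
        = ∑ k, ∑ σ : Fin N → Bool, ∑ l, (if k = l then 0
          else (EE σ k * r k) * (EE σ l * r l) * ((πij k l - π k * π l) / (π k * π l))) :=
          Finset.sum_comm
      _ = ∑ k, ∑ l, ∑ σ : Fin N → Bool, (if k = l then 0
          else (EE σ k * r k) * (EE σ l * r l) * ((πij k l - π k * π l) / (π k * π l))) :=
          Finset.sum_congr rfl (fun k _ => Finset.sum_comm)
      _ = ∑ k, ∑ l, (0:ℝ) := by
          refine Finset.sum_congr rfl (fun k _ => Finset.sum_congr rfl (fun l _ => ?_))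
          by_cases h : k = l
          · simp [h]
          · calc ∑ σ : Fin N → Bool, (if k = l then 0
                else (EE σ k * r k) * (EE σ l * r l) * ((πij k l - π k * π l) / (π k * π l)))
                = ∑ σ : Fin N → Bool,
                    (r k * r l * ((πij k l - π k * π l) / (π k * π l))) * (EE σ k * EE σ l) :=
                  Finset.sum_congr rfl (fun σ _ => by rw [if_neg h]; ring)
              _ = (r k * r l * ((πij k l - π k * π l) / (π k * π l)))
                    * ∑ σ : Fin N → Bool, EE σ k * EE σ l := by rw [Finset.mul_sum]
              _ = 0 := by rw [sum_EE_mul, if_neg h, mul_zero]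
      _ = 0 := by simp
  have hF0 : ∀ σ : Fin N → Bool, (∑ k, ∑ l, (if k = l then 0
      else (EE σ k * r k) * (EE σ l * r l) * ((πij k l - π k * π l) / (π k * π l)))) = 0 :=
    fun σ => (Finset.sum_eq_zero_iff_of_nonpos (fun σ' _ => hcorner σ')).mp hFsum σ
      (Finset.mem_univ σ)
  -- extract the (i,j) coefficient
  intro i j hij
  have hsum2 : ∀ (X : ℝ), (∑ k, ∑ l, (if k = i ∧ l = j then X else 0)) = X := by
    intro X
    have h1 : ∀ k : Fin N, (∑ l, (if k = i ∧ l = j then X else 0))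
        = if k = i then X else 0 := by
      intro k
      by_cases hk : k = i
      · simp only [hk, true_and, if_pos rfl]
        rw [Finset.sum_ite_eq' Finset.univ j (fun _ => X)]
        simp
      · simp [hk]
    rw [Finset.sum_congr rfl (fun k _ => h1 k), Finset.sum_ite_eq' Finset.univ i (fun _ => X)]
    simp
  have hcoef : ∀ k l : Fin N,
      (r k * r l * ((πij k l - π k * π l) / (π k * π l))) * (if k = l then 0
        else (if (k = i ∧ l = j) ∨ (k = j ∧ l = i) then (2:ℝ) ^ N else 0))
      = (if k = i ∧ l = j
          then (r i * r j * ((πij i j - π i * π j) / (π i * π j))) * (2:ℝ) ^ N else 0)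
        + (if k = j ∧ l = i
          then (r j * r i * ((πij j i - π j * π i) / (π j * π i))) * (2:ℝ) ^ N else 0) := by
    intro k l
    by_cases hkl : k = l
    · rw [if_pos hkl, mul_zero,
        if_neg (fun h : k = i ∧ l = j => hij ((h.1.symm.trans hkl).trans h.2)),
        if_neg (fun h : k = j ∧ l = i => hij (h.2.symm.trans (hkl.symm.trans h.1)))]
      ring
    · rw [if_neg hkl]
      by_cases h1 : k = i ∧ l = j
      · rw [if_pos (Or.inl h1), if_neg (fun h : k = j ∧ l = i => hij (h1.1.symm.trans h.1)),
          if_pos h1, h1.1, h1.2]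
        ring
      · by_cases h2 : k = j ∧ l = i
        · rw [if_pos (Or.inr h2), if_neg h1, if_pos h2, h2.1, h2.2]
          ring
        · rw [if_neg (fun h : _ ∨ _ => by rcases h with h | h; exact h1 h; exact h2 h),
            if_neg h1, if_neg h2]
          ring
  have hval : (∑ σ : Fin N → Bool, EE σ i * EE σ j * ∑ k, ∑ l, (if k = l then 0
      else (EE σ k * r k) * (EE σ l * r l) * ((πij k l - π k * π l) / (π k * π l))))
      = (r i * r j * ((πij i j - π i * π j) / (π i * π j))) * (2:ℝ) ^ N
        + (r j * r i * ((πij j i - π j * π i) / (π j * π i))) * (2:ℝ) ^ N := by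
    calc ∑ σ : Fin N → Bool, EE σ i * EE σ j * ∑ k, ∑ l, (if k = l then 0
          else (EE σ k * r k) * (EE σ l * r l) * ((πij k l - π k * π l) / (π k * π l)))
        = ∑ σ : Fin N → Bool, ∑ k, ∑ l, EE σ i * EE σ j * (if k = l then 0
          else (EE σ k * r k) * (EE σ l * r l) * ((πij k l - π k * π l) / (π k * π l))) := by
          refine Finset.sum_congr rfl (fun σ _ => ?_)
          rw [Finset.mul_sum]
          exact Finset.sum_congr rfl (fun k _ => by rw [Finset.mul_sum])
      _ = ∑ k, ∑ σ : Fin N → Bool, ∑ l, EE σ i * EE σ j * (if k = l then 0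
          else (EE σ k * r k) * (EE σ l * r l) * ((πij k l - π k * π l) / (π k * π l))) :=
          Finset.sum_comm
      _ = ∑ k, ∑ l, ∑ σ : Fin N → Bool, EE σ i * EE σ j * (if k = l then 0
          else (EE σ k * r k) * (EE σ l * r l) * ((πij k l - π k * π l) / (π k * π l))) :=
          Finset.sum_congr rfl (fun k _ => Finset.sum_comm)
      _ = ∑ k, ∑ l, (r k * r l * ((πij k l - π k * π l) / (π k * π l))) * (if k = l then 0
          else (if (k = i ∧ l = j) ∨ (k = j ∧ l = i) then (2:ℝ) ^ N else 0)) := by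
          refine Finset.sum_congr rfl (fun k _ => Finset.sum_congr rfl (fun l _ => ?_))
          by_cases hkl : k = l
          · simp [hkl]
          · rw [if_neg hkl, ← sum_EE4 hij hkl, Finset.mul_sum]
            exact Finset.sum_congr rfl (fun σ _ => by rw [if_neg hkl]; ring)
      _ = ∑ k, ∑ l, ((if k = i ∧ l = j
            then (r i * r j * ((πij i j - π i * π j) / (π i * π j))) * (2:ℝ) ^ N else 0)
          + (if k = j ∧ l = i
            then (r j * r i * ((πij j i - π j * π i) / (π j * π i))) * (2:ℝ) ^ N else 0)) :=
          Finset.sum_congr rfl (fun k _ => Finset.sum_congr rfl (fun l _ => hcoef k l))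
      _ = (∑ k, ∑ l, (if k = i ∧ l = j
            then (r i * r j * ((πij i j - π i * π j) / (π i * π j))) * (2:ℝ) ^ N else 0))
          + ∑ k, ∑ l, (if k = j ∧ l = i
            then (r j * r i * ((πij j i - π j * π i) / (π j * π i))) * (2:ℝ) ^ N else 0) := by
          rw [← Finset.sum_add_distrib]
          exact Finset.sum_congr rfl (fun k _ => Finset.sum_add_distrib)
      _ = _ := by
          have e1 := hsum2 ((r i * r j * ((πij i j - π i * π j) / (π i * π j))) * (2:ℝ) ^ N)
          have e2 : (∑ k, ∑ l, (if k = j ∧ l = i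
              then (r j * r i * ((πij j i - π j * π i) / (π j * π i))) * (2:ℝ) ^ N else 0))
              = (r j * r i * ((πij j i - π j * π i) / (π j * π i))) * (2:ℝ) ^ N := by
            have h1 : ∀ k : Fin N, (∑ l, (if k = j ∧ l = i
                then (r j * r i * ((πij j i - π j * π i) / (π j * π i))) * (2:ℝ) ^ N else 0))
                = if k = j then (r j * r i * ((πij j i - π j * π i) / (π j * π i))) * (2:ℝ) ^ N
                  else 0 := by
              intro k
              by_cases hk : k = j
              · simp only [hk, true_and, if_pos rfl]
                rw [Finset.sum_ite_eq' Finset.univ i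
                  (fun _ => (r j * r i * ((πij j i - π j * π i) / (π j * π i))) * (2:ℝ) ^ N)]
                simp
              · simp [hk]
            rw [Finset.sum_congr rfl (fun k _ => h1 k), Finset.sum_ite_eq' Finset.univ j
              (fun _ => (r j * r i * ((πij j i - π j * π i) / (π j * π i))) * (2:ℝ) ^ N)]
            simp
          rw [e1, e2]
  have hzero : (∑ σ : Fin N → Bool, EE σ i * EE σ j * ∑ k, ∑ l, (if k = l then 0
      else (EE σ k * r k) * (EE σ l * r l) * ((πij k l - π k * π l) / (π k * π l)))) = 0 := by
    refine Finset.sum_eq_zero (fun σ _ => ?_)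
    rw [hF0 σ, mul_zero]
  rw [hval] at hzero
  have hsymm : πij j i = πij i j := by
    rw [hπij, hπij]
    exact Finset.sum_congr rfl (fun s _ => if_congr and_comm rfl rfl)
  rw [hsymm] at hzero
  have h2N : (0:ℝ) < 2 ^ N := by positivity
  have hC : r i * r j * ((πij i j - π i * π j) / (π i * π j)) = 0 := by
    have hre : r j * r i * ((πij i j - π j * π i) / (π j * π i))
        = r i * r j * ((πij i j - π i * π j) / (π i * π j)) := by
      rw [mul_comm (π j) (π i), mul_comm (r j) (r i)]
    rw [hre] at hzero
    nlinarith [hzero]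
  have hrr : r i * r j ≠ 0 := mul_ne_zero (hrpos i).ne' (hrpos j).ne'
  have hdiv : (πij i j - π i * π j) / (π i * π j) = 0 := by
    rcases mul_eq_zero.mp hC with h | h
    · exact absurd h hrr
    · exact h
  rcases div_eq_zero_iff.mp hdiv with h | h
  · exact h
  · exact absurd h (mul_ne_zero (hπne i) (hπne j))


/-- Theorem 2: sharpness characterization.
Fix a design `p` with inclusion probabilities `π i > 0` and radii `r i > 0`, and set
`Dπ = ∑ i, r i ^ 2 * (1 - π i)/π i`. The following are equivalent:
(i) some unbiased estimator `δ` has worst-case risk over `Θ` exactly `Dπ`;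
(ii) the midpoint-differenced Horvitz–Thompson estimator has worst-case risk `Dπ`;
(iii) `π_{ij} - π i * π j = 0` for all `i ≠ j` (pairwise independent inclusion
indicators). Worst-case risk being `Dπ` is formalized as `Dπ` being the least
upper bound of the risk over the rectangle `Θ`. -/
theorem sharpness_characterization
    (N : ℕ) (a b : Fin N → ℝ) (hab : ∀ i, a i ≤ b i)
    (m r : Fin N → ℝ)
    (hm : ∀ i, m i = (a i + b i) / 2)
    (hr : ∀ i, r i = (b i - a i) / 2) (hrpos : ∀ i, 0 < r i)
    (p : Finset (Fin N) → ℝ) (hp0 : ∀ s, 0 ≤ p s)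
    (hp1 : ∑ s : Finset (Fin N), p s = 1)
    (π : Fin N → ℝ)
    (hπ : ∀ i, π i = ∑ s : Finset (Fin N), if i ∈ s then p s else 0)
    (hπpos : ∀ i, 0 < π i)
    (πij : Fin N → Fin N → ℝ)
    (hπij : ∀ i j, πij i j = ∑ s : Finset (Fin N), if i ∈ s ∧ j ∈ s then p s else 0)
    (Dπ : ℝ) (hDπ : Dπ = ∑ i, r i ^ 2 * ((1 - π i) / π i)) :
    List.TFAE
      [ -- (i) some unbiased estimator attains worst-case risk Dπ
        (∃ δ : Finset (Fin N) → (Fin N → ℝ) → ℝ,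
          (∀ s (y y' : Fin N → ℝ), (∀ i ∈ s, y i = y' i) → δ s y = δ s y') ∧
          (∀ y : Fin N → ℝ, (∀ i, y i ∈ Set.Icc (a i) (b i)) →
            ∑ s : Finset (Fin N), p s * δ s y = ∑ i, y i) ∧
          IsLUB ((fun y : Fin N → ℝ =>
              ∑ s : Finset (Fin N), p s * (δ s y - ∑ i, y i) ^ 2) ''
            {y : Fin N → ℝ | ∀ i, y i ∈ Set.Icc (a i) (b i)}) Dπ),
        -- (ii) the midpoint-differenced HT estimator attains worst-case risk Dπ
        IsLUB ((fun y : Fin N → ℝ =>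
            ∑ s : Finset (Fin N),
              p s * (((∑ i, m i) + ∑ i ∈ s, (y i - m i) / π i) - ∑ i, y i) ^ 2) ''
          {y : Fin N → ℝ | ∀ i, y i ∈ Set.Icc (a i) (b i)}) Dπ,
        -- (iii) pairwise independence of the inclusion indicators
        ∀ i j, i ≠ j → πij i j - π i * π j = 0 ] := by
  classical
  have hπle : ∀ i, π i ≤ 1 := by
    intro i
    rw [hπ i, ← hp1]
    exact Finset.sum_le_sum (fun s _ => by by_cases h : i ∈ s <;> simp [h, hp0 s])
  -- rewrite of the HT risk at any y
  have hHT : ∀ y : Fin N → ℝ,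
      (∑ s : Finset (Fin N),
        p s * (((∑ i, m i) + ∑ i ∈ s, (y i - m i) / π i) - ∑ i, y i) ^ 2)
      = ∑ i, ∑ j, (if i = j then (y i - m i) ^ 2 * ((1 - π i) / π i)
          else (y i - m i) * (y j - m j) * ((πij i j - π i * π j) / (π i * π j))) := by
    intro y
    rw [← risk_quadform p hp1 π hπ hπpos πij hπij (fun i => y i - m i)]
    apply Finset.sum_congr rfl
    intro s _
    congr 2
    rw [Finset.sum_sub_distrib]
    ring
  tfae_have 3 → 2
  | h3 => by
    have hrisk : ∀ y : Fin N → ℝ,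
        (∑ s : Finset (Fin N),
          p s * (((∑ i, m i) + ∑ i ∈ s, (y i - m i) / π i) - ∑ i, y i) ^ 2)
        = ∑ i, (y i - m i) ^ 2 * ((1 - π i) / π i) := by
      intro y
      rw [hHT y]
      apply Finset.sum_congr rfl
      intro i _
      have hz : ∀ j : Fin N, (if i = j then (y i - m i) ^ 2 * ((1 - π i) / π i)
          else (y i - m i) * (y j - m j) * ((πij i j - π i * π j) / (π i * π j)))
          = if i = j then (y i - m i) ^ 2 * ((1 - π i) / π i) else 0 := by
        intro j
        by_cases h : i = j
        · simp [h]
        · rw [if_neg h, if_neg h, h3 i j h, zero_div, mul_zero]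
      rw [Finset.sum_congr rfl (fun j _ => hz j), Finset.sum_ite_eq Finset.univ i]
      simp
    have hbmem : (fun i => b i) ∈ {y : Fin N → ℝ | ∀ i, y i ∈ Set.Icc (a i) (b i)} :=
      fun i => ⟨hab i, le_refl _⟩
    refine IsGreatest.isLUB ⟨⟨fun i => b i, hbmem, ?_⟩, ?_⟩
    · dsimp only
      rw [hrisk, hDπ]
      exact Finset.sum_congr rfl (fun i _ => by rw [hm, hr]; ring_nf)
    · rintro x ⟨y, hy, rfl⟩
      dsimp only
      rw [hrisk y, hDπ]
      apply Finset.sum_le_sum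
      intro i _
      apply mul_le_mul_of_nonneg_right
      · have h1 := (hy i).1
        have h2 := (hy i).2
        have hmr : m i - r i = a i := by rw [hm, hr]; ring
        have hpr : m i + r i = b i := by rw [hm, hr]; ring
        have habs : |y i - m i| ≤ r i := abs_le.mpr ⟨by linarith, by linarith⟩
        calc (y i - m i) ^ 2 = |y i - m i| ^ 2 := (sq_abs _).symm
        _ ≤ r i ^ 2 := pow_le_pow_left₀ (abs_nonneg _) habs 2
      · exact div_nonneg (by linarith [hπle i]) (hπpos i).le
  tfae_have 2 → 1
  | h2 => by
    refine ⟨fun s y => (∑ i, m i) + ∑ i ∈ s, (y i - m i) / π i, ?_, ?_, h2⟩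
    · intro s y y' hyy
      show (∑ i, m i) + ∑ i ∈ s, (y i - m i) / π i
          = (∑ i, m i) + ∑ i ∈ s, (y' i - m i) / π i
      have h : ∑ i ∈ s, (y i - m i) / π i = ∑ i ∈ s, (y' i - m i) / π i :=
        Finset.sum_congr rfl (fun i hi => by rw [hyy i hi])
      rw [h]
    · intro y hy
      have hsum : ∀ s : Finset (Fin N),
          p s * ((∑ i, m i) + ∑ i ∈ s, (y i - m i) / π i)
          = p s * (∑ i, m i) + p s * ∑ i ∈ s, (y i - m i) / π i := by
        intro s; ring
      rw [Finset.sum_congr rfl (fun s _ => hsum s), Finset.sum_add_distrib,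
        ← Finset.sum_mul, hp1, swap_design_sum p (fun i => (y i - m i) / π i)]
      have : ∀ i : Fin N, (y i - m i) / π i * (∑ s : Finset (Fin N), if i ∈ s then p s else 0)
          = y i - m i := by
        intro i
        rw [← hπ i, div_mul_cancel₀ _ (hπpos i).ne']
      rw [Finset.sum_congr rfl (fun i _ => this i)]
      rw [Finset.sum_sub_distrib]
      ring
  tfae_have 1 → 3
  | h1 => by
    obtain ⟨δ, hloc, hunb, hlub⟩ := h1
    exact one_to_three N a b hab m r hm hr hrpos p hp0 hp1 π hπ hπpos πij hπij Dπ hDπ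
      δ hloc hunb hlub
  tfae_finish
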